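/- Let n ≥ 1, j ≥ 0, k ≥ 0 be integers with 4k + 2j + 3 < 2n. Then in F_2[X]/(X^{2n}) the element X^{2(2k+1)} does not lie in the F_2-linear span of the set {(X² + X^{2j+3})^m : 1 ≤ m ≤ n−1}. -/

import Mathlib

open Polynomial

lemma coeff_aux (j m d : ℕ) :
    (((X:Polynomial (ZMod 2))^2 + X^(2*j+3))^m).coeff d
      = if 2*m ≤ d ∧ (2*j+1) ∣ (d - 2*m)
        then ((m.choose ((d-2*m)/(2*j+1)) : ℕ) : ZMod 2) else 0 := by
  have ht : 0 < 2*j+1 := by omega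
  have hg : ((X:Polynomial (ZMod 2))^2 + X^(2*j+3))^m
      = (Polynomial.expand (ZMod 2) (2*j+1) ((1+X)^m)) * X^(2*m) := by
    rw [map_pow, pow_mul, ← mul_pow]
    congr 1
    rw [map_add, map_one, Polynomial.expand_X]
    ring_nf
  rw [hg, coeff_mul_X_pow']
  by_cases h1 : 2*m ≤ d
  · rw [if_pos h1, coeff_expand ht, coeff_one_add_X_pow]
    by_cases h2 : (2*j+1) ∣ (d - 2*m)
    · rw [if_pos h2, if_pos ⟨h1, h2⟩]
    · rw [if_neg h2, if_neg (by tauto)]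
  · rw [if_neg h1, if_neg (by tauto)]

theorem not_mem_span (n j k : ℕ) (hn : 1 ≤ n) (h : 4 * k + 2 * j + 3 < 2 * n) :
    Ideal.Quotient.mk (Ideal.span {(Polynomial.X : Polynomial (ZMod 2)) ^ (2 * n)})
        (Polynomial.X ^ (2 * (2 * k + 1))) ∉
      Submodule.span (ZMod 2)
        {y | ∃ m : ℕ, 1 ≤ m ∧ m ≤ n - 1 ∧
          y = (Ideal.Quotient.mk
                (Ideal.span {(Polynomial.X : Polynomial (ZMod 2)) ^ (2 * n)})
                (Polynomial.X ^ 2 + Polynomial.X ^ (2 * j + 3))) ^ m} := by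
  intro hmem
  set R := Polynomial (ZMod 2)
  set I : Ideal R := Ideal.span {(X : R)^(2*n)} with hI
  set g : R := X^2 + X^(2*j+3) with hgdef
  set f := (Ideal.Quotient.mkₐ (ZMod 2) I).toLinearMap with hf
  have hfx : ∀ q : R, f q = Ideal.Quotient.mk I q := fun q => rfl
  -- rewrite the set as an image
  have hset : {y | ∃ m : ℕ, 1 ≤ m ∧ m ≤ n - 1 ∧
      y = (Ideal.Quotient.mk I (X^2 + X^(2*j+3)))^m}
      = f '' {q : R | ∃ m : ℕ, 1 ≤ m ∧ m ≤ n - 1 ∧ q = g^m} := by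
    ext y
    constructor
    · rintro ⟨m, h1, h2, rfl⟩
      exact ⟨g^m, ⟨m, h1, h2, rfl⟩, by rw [hfx, map_pow]⟩
    · rintro ⟨q, ⟨m, h1, h2, rfl⟩, rfl⟩
      exact ⟨m, h1, h2, by rw [hfx, map_pow]⟩
  rw [hset, Submodule.span_image] at hmem
  obtain ⟨p, hp, hpe⟩ := hmem
  -- index by Fin n
  set w : Fin n → R := fun m => if 1 ≤ (m:ℕ) ∧ (m:ℕ) ≤ n-1 then g^(m:ℕ) else 0 with hw
  have hsub : {q : R | ∃ m : ℕ, 1 ≤ m ∧ m ≤ n - 1 ∧ q = g^m} ⊆ Set.range w := by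
    rintro q ⟨m, h1, h2, rfl⟩
    have hm : m < n := by omega
    exact ⟨⟨m, hm⟩, by simp [hw, h1, h2]⟩
  have hp' : p ∈ Submodule.span (ZMod 2) (Set.range w) :=
    Submodule.span_mono hsub hp
  obtain ⟨c, hc⟩ := (Submodule.mem_span_range_iff_exists_fun (ZMod 2)).mp hp'
  -- coefficient equality below 2n
  have hco : ∀ d, d < 2*n → p.coeff d = ((X:R)^(4*k+2)).coeff d := by
    intro d hd
    have he : (2:ℕ) * (2*k+1) = 4*k+2 := by ring
    rw [hfx] at hpe
    rw [Ideal.Quotient.eq, hI, Ideal.mem_span_singleton] at hpe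
    obtain ⟨q, hq⟩ := hpe
    have : (p - (X:R)^(2*(2*k+1))).coeff d = 0 := by
      rw [hq, mul_comm, coeff_mul_X_pow', if_neg (by omega)]
    rw [coeff_sub, sub_eq_zero] at this
    rw [this, he]
  -- support set
  set M : Finset (Fin n) :=
    Finset.univ.filter (fun m => c m = 1 ∧ 1 ≤ (m:ℕ) ∧ (m:ℕ) ≤ n-1) with hM
  have hzero : ∀ m : Fin n, m ∉ M → c m • w m = 0 := by
    intro m hm
    simp only [hM, Finset.mem_filter, Finset.mem_univ, true_and, not_and] at hm
    by_cases h1 : c m = 1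
    · have := hm h1
      have : w m = 0 := by
        rw [hw]; simp only []
        rw [if_neg (by tauto)]
      rw [this, smul_zero]
    · have : c m = 0 := by
        have hall : ∀ x : ZMod 2, x ≠ 1 → x = 0 := by decide
        exact hall _ h1
      rw [this, zero_smul]
  have hpcoeff : ∀ D : ℕ, p.coeff D = ∑ m ∈ M, (g^((m:ℕ))).coeff D := by
    intro D
    calc p.coeff D = ∑ m, (c m • w m).coeff D := by rw [← hc, finset_sum_coeff]
      _ = ∑ m ∈ M, (c m • w m).coeff D :=
          (Finset.sum_subset (Finset.subset_univ M)
            (fun x _ hx => by rw [hzero x hx, coeff_zero])).symm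
      _ = ∑ m ∈ M, (g^((m:ℕ))).coeff D := by
          refine Finset.sum_congr rfl (fun m hm => ?_)
          simp only [hM, Finset.mem_filter, Finset.mem_univ, true_and] at hm
          obtain ⟨h1, h2, h3⟩ := hm
          rw [h1, one_smul, hw]
          simp only []
          rw [if_pos ⟨h2, h3⟩]
  by_cases hMe : M = ∅
  · have h1 : p.coeff (4*k+2) = 0 := by rw [hpcoeff, hMe, Finset.sum_empty]
    have h2 := hco (4*k+2) (by omega)
    rw [h1, coeff_X_pow, if_pos rfl] at h2
    exact one_ne_zero h2.symm
  · have hne : M.Nonempty := Finset.nonempty_iff_ne_empty.mpr hMe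
    set m0 := M.min' hne with hm0
    have hm0M : m0 ∈ M := M.min'_mem hne
    obtain ⟨hc0, h1m0, hm0n⟩ : c m0 = 1 ∧ 1 ≤ (m0:ℕ) ∧ (m0:ℕ) ≤ n-1 := by
      simpa [hM, Finset.mem_filter] using hm0M
    have hmin : ∀ m ∈ M, m0 ≤ m := fun m hm => M.min'_le m hm
    have hminv : ∀ m ∈ M, m ≠ m0 → (m0:ℕ) < (m:ℕ) := by
      intro m hm hne2
      exact Fin.lt_def.mp (lt_of_le_of_ne (hmin m hm) (Ne.symm hne2))
    have key1 : p.coeff (2*(m0:ℕ)) = 1 := by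
      rw [hpcoeff, Finset.sum_eq_single m0]
      · rw [hgdef, coeff_aux, if_pos ⟨le_refl _, by simp [Nat.sub_self]⟩]
        simp [Nat.sub_self]
      · intro m hm hne2
        have hlt := hminv m hm hne2
        rw [hgdef, coeff_aux, if_neg (by omega)]
      · intro hcon; exact absurd hm0M hcon
    have hm02 : 2*(m0:ℕ) = 4*k+2 := by
      have h2 := hco (2*(m0:ℕ)) (by omega)
      rw [key1, coeff_X_pow] at h2
      by_contra hne3
      rw [if_neg hne3] at h2
      exact one_ne_zero h2
    have key2 : p.coeff (4*k+2*j+3) = 1 := by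
      rw [hpcoeff, Finset.sum_eq_single m0]
      · rw [hgdef, coeff_aux]
        have hd1 : 2*(m0:ℕ) ≤ 4*k+2*j+3 := by omega
        have hd2 : 4*k+2*j+3 - 2*(m0:ℕ) = 2*j+1 := by omega
        rw [if_pos ⟨hd1, by rw [hd2]⟩, hd2, Nat.div_self (by omega), Nat.choose_one_right]
        have hm0v : (m0:ℕ) = 2*k+1 := by omega
        rw [hm0v]
        push_cast
        have h20 : (2 : ZMod 2) = 0 := by decide
        rw [h20]
        ring
      · intro m hm hne2
        have hlt := hminv m hm hne2
        rw [hgdef, coeff_aux]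
        by_cases hd : 2*(m:ℕ) ≤ 4*k+2*j+3
        · rw [if_neg]
          rintro ⟨-, hdvd⟩
          have h5 : 4*k+2*j+3-2*(m:ℕ) < 2*j+1 := by omega
          have h6 : 0 < 4*k+2*j+3-2*(m:ℕ) := by omega
          have := Nat.eq_zero_of_dvd_of_lt hdvd h5
          omega
        · rw [if_neg (by tauto)]
      · intro hcon; exact absurd hm0M hcon
    have h2 := hco (4*k+2*j+3) h
    rw [key2, coeff_X_pow, if_neg (by omega)] at h2
    exact one_ne_zero h2
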